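/- arXiv:1509.09162 — 3 statements merged into one kernel-verified Lean document; each statement's English description precedes it below -/
import Mathlib

section
/- Let p ∈ [1,∞] and r ∈ (0,∞) with r < p′, where p′ is the conjugate exponent of p. The exponent max{1/r − 1/p′, 0} = 1/r − 1/p′ in the linear inequality (Σ_{i=1}^n |T(e_i)|^r)^{1/r} ≤ C · n^t · ‖T‖ is optimal: if there is a constant C ≥ 1 and t ≥ 0 such that the inequality holds for all n and all linear functionals T : ℓ_p^n → ℂ, then t ≥ 1/r − 1/p′. -/
open scoped ENNReal NNReal
open Finset

private lemma sum_bound (p p' : ℝ≥0∞) [Fact (1 ≤ p)] (hc : 1 / p + 1 / p' = 1)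
    (n : ℕ) (x : PiLp p (fun _ : Fin n => ℂ)) :
    ‖∑ i, x i‖ ≤ (n : ℝ) ^ ((1 / p').toReal) * ‖x‖ := by
  have hp1 : 1 ≤ p := Fact.out
  rcases eq_or_ne p ∞ with hp | hp
  · -- p = ∞, p' = 1
    have hp' : p' = 1 := by
      rw [hp] at hc; simpa using hc
    rcases Nat.eq_zero_or_pos n with hn | hn
    · subst hn; simp [hp']
    have hne : Nonempty (Fin n) := ⟨⟨0, hn⟩⟩
    have hxs : ∀ i, ‖x i‖ ≤ ‖x‖ := by
      intro i
      subst hp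
      rw [PiLp.norm_eq_ciSup]
      exact le_ciSup (f := fun i => ‖x i‖) (Set.Finite.bddAbove (Set.finite_range _)) i
    calc ‖∑ i, x i‖ ≤ ∑ i : Fin n, ‖x i‖ := norm_sum_le _ _
      _ ≤ ∑ _i : Fin n, ‖x‖ := Finset.sum_le_sum fun i _ => hxs i
      _ = (n : ℝ) * ‖x‖ := by simp [Finset.sum_const, mul_comm]
      _ ≤ (n : ℝ) ^ ((1 / p').toReal) * ‖x‖ := by
          simp [hp']
  rcases eq_or_ne p 1 with hq | hq
  · -- p = 1, p' = ∞
    have hp' : (1 / p' : ℝ≥0∞) = 0 := by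
      rw [hq] at hc
      rw [show (1:ℝ≥0∞)/1 = 1 by simp] at hc
      exact (ENNReal.add_right_inj ENNReal.one_ne_top).mp (hc.trans (add_zero 1).symm)
    rw [hp']
    simp only [ENNReal.toReal_zero, Real.rpow_zero, one_mul]
    calc ‖∑ i, x i‖ ≤ ∑ i : Fin n, ‖x i‖ := norm_sum_le _ _
      _ = ‖x‖ := by
          rw [PiLp.norm_eq_sum (by rw [hq]; norm_num)]
          simp [hq]
  · -- 1 < p < ∞
    have hppos : p ≠ 0 := by positivity
    have hp'0 : p' ≠ 0 := by
      rintro rfl; simp at hc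
    have hp'top : p' ≠ ∞ := by
      rintro rfl
      rw [ENNReal.div_top, add_zero, ENNReal.div_eq_one_iff hppos hp] at hc
      exact hq hc.symm
    have ha1 : 1 < p.toReal := by
      rw [← ENNReal.toReal_one]
      exact (ENNReal.toReal_lt_toReal ENNReal.one_ne_top hp).mpr (lt_of_le_of_ne hp1 (Ne.symm hq))
    have hconj_real : (p.toReal)⁻¹ + (p'.toReal)⁻¹ = 1 := by
      have h1 : p⁻¹ ≠ ∞ := by simp [hppos]
      have h2 : p'⁻¹ ≠ ∞ := by simp [hp'0]
      have := congrArg ENNReal.toReal hc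
      rw [one_div, one_div, ENNReal.toReal_add h1 h2, ENNReal.toReal_inv, ENNReal.toReal_inv,
        ENNReal.toReal_one] at this
      exact this
    have hconj : Real.HolderConjugate p.toReal p'.toReal := Real.holderConjugate_iff.mpr ⟨ha1, hconj_real⟩
    have hbexp : (1 / p').toReal = 1 / p'.toReal := by
      rw [one_div, one_div, ENNReal.toReal_inv]
    have hnn : ‖x‖₊ = (∑ i, ‖x i‖₊ ^ p.toReal) ^ (1 / p.toReal) := PiLp.nnnorm_eq_sum hp x
    have hH := NNReal.inner_le_Lp_mul_Lq Finset.univ (fun i => ‖x i‖₊) (fun _ => 1) hconj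
    simp only [mul_one, NNReal.one_rpow, Finset.sum_const, Finset.card_univ, Fintype.card_fin,
      nsmul_eq_mul, Nat.cast_id] at hH
    have hH' : (∑ i : Fin n, ‖x i‖₊) ≤ ‖x‖₊ * (n : ℝ≥0) ^ (1 / p'.toReal) := by
      rw [hnn]; exact hH
    have hR := NNReal.coe_le_coe.mpr hH'
    push_cast [NNReal.coe_rpow] at hR
    calc ‖∑ i, x i‖ ≤ ∑ i : Fin n, ‖x i‖ := norm_sum_le _ _
      _ ≤ (n : ℝ) ^ ((1 / p').toReal) * ‖x‖ := by rw [hbexp, mul_comm]; exact hR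

/-- Optimality of the exponent `1/r - 1/p'` in the linear inequality. -/
theorem stmt4 (p p' : ℝ≥0∞) [Fact (1 ≤ p)] (hc : 1 / p + 1 / p' = 1)
    (r : ℝ) (hr : 0 < r) (hrp' : ENNReal.ofReal r < p')
    (C t : ℝ) (hC : 1 ≤ C) (ht : 0 ≤ t)
    (h : ∀ (n : ℕ) (T : PiLp p (fun _ : Fin n => ℂ) →L[ℂ] ℂ),
      (∑ i : Fin n, ‖T (WithLp.toLp p (Pi.single i 1))‖ ^ r) ^ (1 / r) ≤ C * (n : ℝ) ^ t * ‖T‖) :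
    1 / r - (1 / p').toReal ≤ t := by
  set b := (1 / p').toReal with hb
  have hb0 : 0 ≤ b := ENNReal.toReal_nonneg
  have key : ∀ n : ℕ, (n : ℝ) ^ (1 / r) ≤ C * (n : ℝ) ^ t * (n : ℝ) ^ b := by
    intro n
    let L : PiLp p (fun _ : Fin n => ℂ) →ₗ[ℂ] ℂ :=
      { toFun := fun x => ∑ i, x i
        map_add' := fun x y => by
          show (∑ i, (x + y) i) = _
          simp [Finset.sum_add_distrib]
        map_smul' := fun c x => by
          show (∑ i, (c • x) i) = _
          simp [Finset.mul_sum] }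
    have hbd : ∀ x, ‖L x‖ ≤ (n : ℝ) ^ b * ‖x‖ := fun x => sum_bound p p' hc n x
    let T : PiLp p (fun _ : Fin n => ℂ) →L[ℂ] ℂ := L.mkContinuous _ hbd
    have hTn : ‖T‖ ≤ (n : ℝ) ^ b := L.mkContinuous_norm_le (by positivity) hbd
    have h1 := h n T
    have hT1 : ∀ i : Fin n, T (WithLp.toLp p (Pi.single i 1)) = 1 := by
      intro i
      show (∑ j, Pi.single i (1:ℂ) j) = 1
      simp
    simp only [hT1, norm_one, Real.one_rpow, Finset.sum_const, Finset.card_univ,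
      Fintype.card_fin, nsmul_eq_mul, mul_one] at h1
    have hCn : 0 ≤ C * (n : ℝ) ^ t := by
      exact mul_nonneg (by linarith) (Real.rpow_nonneg (Nat.cast_nonneg n) t)
    calc (n : ℝ) ^ (1 / r) ≤ C * (n : ℝ) ^ t * ‖T‖ := h1
      _ ≤ C * (n : ℝ) ^ t * ((n : ℝ) ^ b) := mul_le_mul_of_nonneg_left hTn hCn
  by_contra hcon
  push_neg at hcon
  set a := 1 / r - b - t with ha
  have ha0 : 0 < a := by rw [ha]; linarith
  set N : ℕ := max 1 ⌈(C + 1) ^ (1 / a)⌉₊ with hN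
  have hN1 : 1 ≤ N := le_max_left _ _
  have hNpos : (0 : ℝ) < N := by exact_mod_cast Nat.lt_of_lt_of_le Nat.zero_lt_one hN1
  have hNge : (C + 1) ^ (1 / a) ≤ (N : ℝ) := by
    refine le_trans (Nat.le_ceil _) ?_
    exact_mod_cast le_max_right 1 ⌈(C + 1) ^ (1 / a)⌉₊
  have h2 := key N
  have hpos : 0 < (N : ℝ) ^ t * (N : ℝ) ^ b := by positivity
  have h3 : (N : ℝ) ^ a ≤ C := by
    have hmul : (N : ℝ) ^ a * ((N : ℝ) ^ t * (N : ℝ) ^ b) ≤ C * ((N : ℝ) ^ t * (N : ℝ) ^ b) := by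
      calc (N : ℝ) ^ a * ((N : ℝ) ^ t * (N : ℝ) ^ b) = (N : ℝ) ^ (1 / r) := by
            rw [← Real.rpow_add hNpos, ← Real.rpow_add hNpos]
            congr 1
            rw [ha]; ring
        _ ≤ C * (N : ℝ) ^ t * (N : ℝ) ^ b := h2
        _ = C * ((N : ℝ) ^ t * (N : ℝ) ^ b) := by ring
    exact le_of_mul_le_mul_right hmul hpos
  have h4 : C + 1 ≤ (N : ℝ) ^ a := by
    have hC1 : (0 : ℝ) ≤ C + 1 := by linarith
    calc C + 1 = ((C + 1) ^ (1 / a)) ^ a := by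
          rw [← Real.rpow_mul hC1, one_div, inv_mul_cancel₀ ha0.ne', Real.rpow_one]
      _ ≤ (N : ℝ) ^ a := Real.rpow_le_rpow (Real.rpow_nonneg hC1 _) hNge ha0.le
  linarith
end

section
/- Let p₁, p₂ ∈ (1,∞] with 1/p₁ + 1/p₂ < 1, and let r₁, r₂ ∈ (0,∞). Suppose there exist a constant C ≥ 1 and t₁ ≥ 0 such that for all n and all bounded bilinear forms U : ℓ_{p₁}^{n} × ℓ_{p₂}^{n} → ℂ we have (Σ_{i=1}^{n} (Σ_{j=1}^{n} |U(e_i,e_j)|^{r₂})^{r₁/r₂})^{1/r₁} ≤ C n^{t₁} ‖U‖. Then t₁ ≥ 1/r₁ − (1 − 1/p₁ − 1/p₂). -/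
open scoped ENNReal
open Finset

private lemma aux_sum_le {n : ℕ} (f : Fin n → ℝ) (hf : ∀ j, 0 ≤ f j) {p : ℝ} (hp : 1 < p) :
    ∑ j, f j ≤ (∑ j, f j ^ p) ^ (1 / p) * (n : ℝ) ^ (1 - 1 / p) := by
  have hp0 : (0:ℝ) < p := lt_trans one_pos hp
  have hinv : (0:ℝ) < 1 - p⁻¹ := by
    have : p⁻¹ < 1 := by rw [inv_lt_one_iff₀]; right; exact hp
    linarith
  have hq : p.HolderConjugate (1 - p⁻¹)⁻¹ := Real.holderConjugate_iff.mpr ⟨hp, by rw [inv_inv]; ring⟩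
  have H := Real.inner_le_Lp_mul_Lq_of_nonneg (s := Finset.univ) hq
      (f := f) (g := fun _ => (1:ℝ)) (fun i _ => hf i) (fun i _ => zero_le_one)
  simp only [mul_one, Real.one_rpow, Finset.sum_const, Finset.card_univ, Fintype.card_fin,
    nsmul_eq_mul] at H
  calc ∑ j, f j ≤ (∑ j, f j ^ p) ^ (1 / p) * ((n:ℝ)) ^ (1 / (1 - p⁻¹)⁻¹) := H
    _ = _ := by rw [one_div ((1 - p⁻¹)⁻¹), inv_inv, one_div]

private lemma aux_lp_mono {n : ℕ} (f : Fin n → ℝ) (hf : ∀ j, 0 ≤ f j) {q p : ℝ}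
    (hq : 0 < q) (hqp : q < p) :
    (∑ j, f j ^ q) ^ (1 / q) ≤ (n : ℝ) ^ (1 / q - 1 / p) * (∑ j, f j ^ p) ^ (1 / p) := by
  have hp0 : (0:ℝ) < p := hq.trans hqp
  have h1 : 1 < p / q := (one_lt_div hq).2 hqp
  have A := aux_sum_le (fun j => f j ^ q) (fun j => Real.rpow_nonneg (hf j) q) h1
  have e1 : ∀ j : Fin n, (f j ^ q) ^ (p / q) = f j ^ p := fun j => by
    rw [← Real.rpow_mul (hf j)]
    congr 1
    field_simp
  simp only [e1] at A
  have hsum : (0:ℝ) ≤ (∑ j, f j ^ p) ^ (1 / (p / q)) * (n:ℝ) ^ (1 - 1 / (p / q)) :=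
    mul_nonneg (Real.rpow_nonneg (Finset.sum_nonneg fun j _ => Real.rpow_nonneg (hf j) p) _)
      (Real.rpow_nonneg (Nat.cast_nonneg n) _)
  have B := Real.rpow_le_rpow (Finset.sum_nonneg fun j _ => Real.rpow_nonneg (hf j) q) A
      (le_of_lt (by positivity : (0:ℝ) < 1 / q))
  calc (∑ j, f j ^ q) ^ (1 / q)
      ≤ ((∑ j, f j ^ p) ^ (1 / (p / q)) * (n:ℝ) ^ (1 - 1 / (p / q))) ^ (1 / q) := B
    _ = (n : ℝ) ^ (1 / q - 1 / p) * (∑ j, f j ^ p) ^ (1 / p) := by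
        rw [Real.mul_rpow (Real.rpow_nonneg (Finset.sum_nonneg fun j _ =>
              Real.rpow_nonneg (hf j) p) _) (Real.rpow_nonneg (Nat.cast_nonneg n) _),
          ← Real.rpow_mul (Finset.sum_nonneg fun j _ => Real.rpow_nonneg (hf j) p),
          ← Real.rpow_mul (Nat.cast_nonneg n), mul_comm]
        have hE1 : 1 / (p / q) * (1 / q) = 1 / p := by
          rw [one_div_div]
          field_simp
        have hE2 : (1 - 1 / (p / q)) * (1 / q) = 1 / q - 1 / p := by
          rw [sub_mul, one_mul, hE1]
        rw [hE1, hE2]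

private lemma diag_bound {p₁ p₂ : ℝ≥0∞} [Fact (1 ≤ p₁)] [Fact (1 ≤ p₂)]
    (hp₁ : 1 < p₁) (hp₂ : 1 < p₂) (hp : p₁⁻¹ + p₂⁻¹ < 1) {n : ℕ}
    (x : PiLp p₁ (fun _ : Fin n => ℂ)) (y : PiLp p₂ (fun _ : Fin n => ℂ)) :
    ∑ j, ‖x j‖ * ‖y j‖ ≤ (n : ℝ) ^ (1 - (p₁⁻¹).toReal - (p₂⁻¹).toReal) * ‖x‖ * ‖y‖ := by
  have hxn : (0:ℝ) ≤ ‖x‖ := norm_nonneg x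
  have hyn : (0:ℝ) ≤ ‖y‖ := norm_nonneg y
  rcases eq_or_ne p₁ ⊤ with h1 | h1
  · rcases eq_or_ne p₂ ⊤ with h2 | h2
    · subst h1; subst h2
      simp only [ENNReal.inv_top, ENNReal.toReal_zero, sub_zero, Real.rpow_one]
      have hx : ∀ j, ‖x j‖ ≤ ‖x‖ := fun j => by
        rw [PiLp.norm_eq_ciSup]
        exact le_ciSup (f := fun i => ‖x i‖) (Set.finite_range _).bddAbove j
      have hy : ∀ j, ‖y j‖ ≤ ‖y‖ := fun j => by
        rw [PiLp.norm_eq_ciSup]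
        exact le_ciSup (f := fun i => ‖y i‖) (Set.finite_range _).bddAbove j
      calc ∑ j, ‖x j‖ * ‖y j‖ ≤ ∑ _j : Fin n, ‖x‖ * ‖y‖ :=
            Finset.sum_le_sum fun j _ => mul_le_mul (hx j) (hy j) (norm_nonneg _) hxn
        _ = (n:ℝ) * ‖x‖ * ‖y‖ := by simp [mul_assoc]
    · subst h1
      have hQ : 1 < p₂.toReal := by
        rw [← ENNReal.toReal_one]
        exact (ENNReal.toReal_lt_toReal (by simp) h2).2 hp₂
      have hQ0 : (0:ℝ) < p₂.toReal := lt_trans one_pos hQ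
      simp only [ENNReal.inv_top, ENNReal.toReal_zero, sub_zero, ENNReal.toReal_inv]
      have hx : ∀ j, ‖x j‖ ≤ ‖x‖ := fun j => by
        rw [PiLp.norm_eq_ciSup]
        exact le_ciSup (f := fun i => ‖x i‖) (Set.finite_range _).bddAbove j
      have hyeq : ‖y‖ = (∑ j, ‖y j‖ ^ p₂.toReal) ^ (1 / p₂.toReal) :=
        PiLp.norm_eq_sum hQ0 y
      have A := aux_sum_le (fun j => ‖y j‖) (fun j => norm_nonneg _) hQ
      calc ∑ j, ‖x j‖ * ‖y j‖ ≤ ∑ j, ‖x‖ * ‖y j‖ :=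
            Finset.sum_le_sum fun j _ => mul_le_mul_of_nonneg_right (hx j) (norm_nonneg _)
        _ = ‖x‖ * ∑ j, ‖y j‖ := by rw [Finset.mul_sum]
        _ ≤ ‖x‖ * ((∑ j, ‖y j‖ ^ p₂.toReal) ^ (1 / p₂.toReal) * (n:ℝ) ^ (1 - 1/p₂.toReal)) :=
            mul_le_mul_of_nonneg_left A hxn
        _ = (n:ℝ) ^ (1 - (p₂.toReal)⁻¹) * ‖x‖ * ‖y‖ := by
            rw [hyeq, ← one_div]; ring
  · rcases eq_or_ne p₂ ⊤ with h2 | h2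
    · subst h2
      have hP : 1 < p₁.toReal := by
        rw [← ENNReal.toReal_one]
        exact (ENNReal.toReal_lt_toReal (by simp) h1).2 hp₁
      have hP0 : (0:ℝ) < p₁.toReal := lt_trans one_pos hP
      simp only [ENNReal.inv_top, ENNReal.toReal_zero, sub_zero, ENNReal.toReal_inv]
      have hy : ∀ j, ‖y j‖ ≤ ‖y‖ := fun j => by
        rw [PiLp.norm_eq_ciSup]
        exact le_ciSup (f := fun i => ‖y i‖) (Set.finite_range _).bddAbove j
      have hxeq : ‖x‖ = (∑ j, ‖x j‖ ^ p₁.toReal) ^ (1 / p₁.toReal) :=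
        PiLp.norm_eq_sum hP0 x
      have A := aux_sum_le (fun j => ‖x j‖) (fun j => norm_nonneg _) hP
      calc ∑ j, ‖x j‖ * ‖y j‖ ≤ ∑ j, ‖x j‖ * ‖y‖ :=
            Finset.sum_le_sum fun j _ => mul_le_mul_of_nonneg_left (hy j) (norm_nonneg _)
        _ = (∑ j, ‖x j‖) * ‖y‖ := by rw [Finset.sum_mul]
        _ ≤ ((∑ j, ‖x j‖ ^ p₁.toReal) ^ (1 / p₁.toReal) * (n:ℝ) ^ (1 - 1/p₁.toReal)) * ‖y‖ :=
            mul_le_mul_of_nonneg_right A hyn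
        _ = (n:ℝ) ^ (1 - (p₁.toReal)⁻¹ - 0) * ‖x‖ * ‖y‖ := by
            rw [hxeq, ← one_div, sub_zero]; ring
        _ = _ := by norm_num
    · -- both finite
      have hP : 1 < p₁.toReal := by
        rw [← ENNReal.toReal_one]
        exact (ENNReal.toReal_lt_toReal (by simp) h1).2 hp₁
      have hQ : 1 < p₂.toReal := by
        rw [← ENNReal.toReal_one]
        exact (ENNReal.toReal_lt_toReal (by simp) h2).2 hp₂
      have hP0 : (0:ℝ) < p₁.toReal := lt_trans one_pos hP
      have hQ0 : (0:ℝ) < p₂.toReal := lt_trans one_pos hQ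
      set P := p₁.toReal
      set Q := p₂.toReal
      have hab : P⁻¹ + Q⁻¹ < 1 := by
        have h1' : p₁⁻¹ ≠ ⊤ := by
          simp [ENNReal.inv_ne_top]
          exact fun h => by simp [h] at hp₁
        have h2' : p₂⁻¹ ≠ ⊤ := by
          simp [ENNReal.inv_ne_top]
          exact fun h => by simp [h] at hp₂
        have := (ENNReal.toReal_lt_toReal (ENNReal.add_ne_top.2 ⟨h1', h2'⟩) (by simp)).2 hp
        rwa [ENNReal.toReal_add h1' h2', ENNReal.toReal_one, ENNReal.toReal_inv,
          ENNReal.toReal_inv] at this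
      have hPi : (0:ℝ) < 1 - P⁻¹ := by
        have : P⁻¹ < 1 := by rw [inv_lt_one_iff₀]; right; exact hP
        linarith
      set P' := (1 - P⁻¹)⁻¹ with hP'def
      have hP'0 : (0:ℝ) < P' := inv_pos.2 hPi
      have hP'Q : P' < Q := by
        have hlt : Q⁻¹ < 1 - P⁻¹ := by linarith
        calc P' = (1 - P⁻¹)⁻¹ := rfl
          _ < (Q⁻¹)⁻¹ := by
              apply inv_strictAnti₀ (inv_pos.2 hQ0) hlt
          _ = Q := inv_inv Q
      have hconj : P.HolderConjugate P' := Real.holderConjugate_iff.mpr ⟨hP, by rw [hP'def, inv_inv]; ring⟩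
      have H1 := Real.inner_le_Lp_mul_Lq_of_nonneg (s := Finset.univ) hconj
        (f := fun j => ‖x j‖) (g := fun j => ‖y j‖)
        (fun i _ => norm_nonneg _) (fun i _ => norm_nonneg _)
      have H2 := aux_lp_mono (fun j => ‖y j‖) (fun j => norm_nonneg _) hP'0 hP'Q
      have hxeq : ‖x‖ = (∑ j, ‖x j‖ ^ P) ^ (1 / P) := PiLp.norm_eq_sum hP0 x
      have hyeq : ‖y‖ = (∑ j, ‖y j‖ ^ Q) ^ (1 / Q) := PiLp.norm_eq_sum hQ0 y
      have hxnn : (0:ℝ) ≤ (∑ j, ‖x j‖ ^ P) ^ (1 / P) :=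
        Real.rpow_nonneg (Finset.sum_nonneg fun j _ => Real.rpow_nonneg (norm_nonneg _) _) _
      have hexp : 1 / P' - 1 / Q = 1 - (p₁⁻¹).toReal - (p₂⁻¹).toReal := by
        rw [ENNReal.toReal_inv, ENNReal.toReal_inv, hP'def, one_div, inv_inv]
        ring
      calc ∑ j, ‖x j‖ * ‖y j‖
          ≤ (∑ j, ‖x j‖ ^ P) ^ (1 / P) * (∑ j, ‖y j‖ ^ P') ^ (1 / P') := H1
        _ ≤ (∑ j, ‖x j‖ ^ P) ^ (1 / P) *
              ((n:ℝ) ^ (1 / P' - 1 / Q) * (∑ j, ‖y j‖ ^ Q) ^ (1 / Q)) :=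
            mul_le_mul_of_nonneg_left H2 hxnn
        _ = (n:ℝ) ^ (1 - (p₁⁻¹).toReal - (p₂⁻¹).toReal) * ‖x‖ * ‖y‖ := by
            rw [hxeq, hyeq, hexp]; ring

private noncomputable def diagCLM (p₁ p₂ : ℝ≥0∞) [Fact (1 ≤ p₁)] [Fact (1 ≤ p₂)]
    (hp₁ : 1 < p₁) (hp₂ : 1 < p₂) (hp : p₁⁻¹ + p₂⁻¹ < 1) (n : ℕ) :
    PiLp p₁ (fun _ : Fin n => ℂ) →L[ℂ] PiLp p₂ (fun _ : Fin n => ℂ) →L[ℂ] ℂ :=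
  LinearMap.mkContinuous₂
    (LinearMap.mk₂ ℂ (fun x y => ∑ j, x j * y j)
      (fun x x' y => by simp [add_mul, Finset.sum_add_distrib]
      )
      (fun c x y => by simp [Finset.mul_sum, mul_assoc])
      (fun x y y' => by simp [mul_add, Finset.sum_add_distrib])
      (fun c x y => by simp [Finset.mul_sum, mul_left_comm]))
    ((n : ℝ) ^ (1 - (p₁⁻¹).toReal - (p₂⁻¹).toReal))
    (fun x y => by
      simp only [LinearMap.mk₂_apply]
      calc ‖∑ j, x j * y j‖ ≤ ∑ j, ‖x j * y j‖ := norm_sum_le _ _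
        _ = ∑ j, ‖x j‖ * ‖y j‖ := by simp [norm_mul]
        _ ≤ _ := diag_bound hp₁ hp₂ hp x y)

private lemma diagCLM_norm_le (p₁ p₂ : ℝ≥0∞) [Fact (1 ≤ p₁)] [Fact (1 ≤ p₂)]
    (hp₁ : 1 < p₁) (hp₂ : 1 < p₂) (hp : p₁⁻¹ + p₂⁻¹ < 1) (n : ℕ) :
    ‖diagCLM p₁ p₂ hp₁ hp₂ hp n‖ ≤ (n : ℝ) ^ (1 - (p₁⁻¹).toReal - (p₂⁻¹).toReal) :=
  LinearMap.mkContinuous₂_norm_le _ (Real.rpow_nonneg (Nat.cast_nonneg n) _) _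

private lemma diagCLM_apply (p₁ p₂ : ℝ≥0∞) [Fact (1 ≤ p₁)] [Fact (1 ≤ p₂)]
    (hp₁ : 1 < p₁) (hp₂ : 1 < p₂) (hp : p₁⁻¹ + p₂⁻¹ < 1) (n : ℕ) (i j : Fin n) :
    diagCLM p₁ p₂ hp₁ hp₂ hp n (WithLp.toLp p₁ (Pi.single i 1)) (WithLp.toLp p₂ (Pi.single j 1))
      = if i = j then 1 else 0 := by
  rw [diagCLM, LinearMap.mkContinuous₂_apply, LinearMap.mk₂_apply]
  rcases eq_or_ne i j with rfl | hij
  · simp [Pi.single_apply]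
  · rw [Finset.sum_eq_zero, if_neg hij]
    intro k _
    by_cases hk : k = i <;> by_cases hk2 : k = j <;> simp_all [Pi.single_apply]

/-- Optimality of the exponent `t₁` in the bilinear mixed-sum inequality:
necessarily `t₁ ≥ 1/r₁ - (1 - 1/p₁ - 1/p₂)`. -/
theorem stmt7 (p₁ p₂ : ℝ≥0∞) [Fact (1 ≤ p₁)] [Fact (1 ≤ p₂)]
    (hp₁ : 1 < p₁) (hp₂ : 1 < p₂) (hp : p₁⁻¹ + p₂⁻¹ < 1)
    (r₁ r₂ : ℝ) (hr₁ : 0 < r₁) (hr₂ : 0 < r₂)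
    (C : ℝ) (hC : 1 ≤ C) (t₁ : ℝ) (ht₁ : 0 ≤ t₁)
    (h : ∀ (n : ℕ)
      (U : PiLp p₁ (fun _ : Fin n => ℂ) →L[ℂ] PiLp p₂ (fun _ : Fin n => ℂ) →L[ℂ] ℂ),
      (∑ i : Fin n, (∑ j : Fin n, ‖U (WithLp.toLp p₁ (Pi.single i 1)) (WithLp.toLp p₂ (Pi.single j 1))‖ ^ r₂) ^ (r₁ / r₂)) ^ (1 / r₁)
        ≤ C * (n : ℝ) ^ t₁ * ‖U‖) :
    1 / r₁ - (1 - (p₁⁻¹).toReal - (p₂⁻¹).toReal) ≤ t₁ := by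
  set s : ℝ := 1 - (p₁⁻¹).toReal - (p₂⁻¹).toReal with hs
  by_contra hlt
  push_neg at hlt
  set e : ℝ := 1 / r₁ - s - t₁ with he
  have he0 : 0 < e := by rw [he]; linarith
  obtain ⟨n, hn⟩ := exists_nat_gt (max 1 (C ^ (1 / e)))
  have hn1 : (1:ℝ) < n := lt_of_le_of_lt (le_max_left _ _) hn
  have hn0 : (0:ℝ) < n := lt_trans one_pos hn1
  have hCn : C < (n:ℝ) ^ e := by
    have hC0 : (0:ℝ) ≤ C := le_trans zero_le_one hC
    have h2 : C ^ (1 / e) < (n:ℝ) := lt_of_le_of_lt (le_max_right _ _) hn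
    have := Real.rpow_lt_rpow (Real.rpow_nonneg hC0 _) h2 he0
    rwa [one_div, Real.rpow_inv_rpow hC0 he0.ne'] at this
  have key := h n (diagCLM p₁ p₂ hp₁ hp₂ hp n)
  have hlhs : (∑ i : Fin n, (∑ j : Fin n,
      ‖diagCLM p₁ p₂ hp₁ hp₂ hp n (WithLp.toLp p₁ (Pi.single i 1)) (WithLp.toLp p₂ (Pi.single j 1))‖ ^ r₂) ^ (r₁ / r₂)) ^ (1 / r₁)
      = (n : ℝ) ^ (1 / r₁) := by
    have hinner : ∀ i : Fin n, (∑ j : Fin n,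
        ‖diagCLM p₁ p₂ hp₁ hp₂ hp n (WithLp.toLp p₁ (Pi.single i 1)) (WithLp.toLp p₂ (Pi.single j 1))‖ ^ r₂) = 1 := by
      intro i
      have : ∀ j : Fin n,
          ‖diagCLM p₁ p₂ hp₁ hp₂ hp n (WithLp.toLp p₁ (Pi.single i 1)) (WithLp.toLp p₂ (Pi.single j 1))‖ ^ r₂
          = if i = j then 1 else 0 := by
        intro j
        rw [diagCLM_apply]
        rcases eq_or_ne i j with rfl | hij
        · simp
        · simp [hij, Real.zero_rpow hr₂.ne']
      simp only [this]
      simp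
    simp only [hinner, Real.one_rpow, Finset.sum_const, Finset.card_univ, Fintype.card_fin,
      nsmul_eq_mul, mul_one]
  rw [hlhs] at key
  have hnorm := diagCLM_norm_le p₁ p₂ hp₁ hp₂ hp n
  have hCt : (0:ℝ) < C * (n:ℝ) ^ t₁ :=
    mul_pos (lt_of_lt_of_le one_pos hC) (Real.rpow_pos_of_pos hn0 _)
  have chain : (n:ℝ) ^ (1 / r₁) < (n:ℝ) ^ (1 / r₁) := by
    calc (n:ℝ) ^ (1 / r₁) ≤ C * (n:ℝ) ^ t₁ * ‖diagCLM p₁ p₂ hp₁ hp₂ hp n‖ := key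
      _ ≤ C * (n:ℝ) ^ t₁ * (n:ℝ) ^ s := mul_le_mul_of_nonneg_left hnorm hCt.le
      _ < (n:ℝ) ^ e * (n:ℝ) ^ t₁ * (n:ℝ) ^ s := by
          have := mul_lt_mul_of_pos_right hCn (Real.rpow_pos_of_pos hn0 t₁)
          exact mul_lt_mul_of_pos_right this (Real.rpow_pos_of_pos hn0 s)
      _ = (n:ℝ) ^ (1 / r₁) := by
          rw [← Real.rpow_add hn0, ← Real.rpow_add hn0]
          congr 1
          rw [he]; ring
  exact lt_irrefl _ chain
end

section
/- Let m ≥ 2, r₁,…,r_m ∈ (0,∞), p₁,…,p_m ∈ [2,∞], and suppose Σ_j 1/p_j ≤ 1/2 and 1/r_j ≥ (m+1−2Σ_j 1/p_j)/(2m) for all j = 1,…,m (i.e., all r_j are at most the Hardy–Littlewood exponent 2m/(m+1−2|1/p|)). Assume the generalized Hardy–Littlewood inequality: there is D ≥ 1 such that (Σ_{i₁,…,i_m=1}^n |T(e_{i₁},…,e_{i_m})|^{ρ})^{1/ρ} ≤ D‖T‖ with ρ = 2m/(m+1−2|1/p|) for all m-linear forms T : ℓ_{p₁}^n × ⋯ ×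 ℓ_{p_m}^n → ℂ and all n. Then (Σ_{i₁}(…(Σ_{i_m}|T(e_{i₁},…,e_{i_m})|^{r_m})^{r_{m-1}/r_m}…)^{r₁/r₂})^{1/r₁} ≤ D · n^{s} · ‖T‖, where s = Σ_{j=1}^m 1/r_j + |1/p| − (m+1)/2. -/
open scoped ENNReal

noncomputable def mixedSum {n : ℕ} : (m : ℕ) → (Fin m → ℝ) → ((Fin m → Fin n) → ℝ) → ℝ
  | 0, _, F => F finZeroElim
  | m + 1, r, F =>
      (∑ i : Fin n,
        (mixedSum m (fun j => r j.succ) (fun is => F (Fin.cons i is))) ^ r 0) ^ (1 / r 0)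

lemma mixedSum_nonneg {n : ℕ} : ∀ (m : ℕ) (r : Fin m → ℝ) (F : (Fin m → Fin n) → ℝ),
    (∀ i, 0 ≤ F i) → 0 ≤ mixedSum m r F
  | 0, _, F, hF => hF _
  | m + 1, r, F, hF =>
      Real.rpow_nonneg (Finset.sum_nonneg fun i _ =>
        Real.rpow_nonneg (mixedSum_nonneg m _ _ fun _ => hF _) _) _

lemma lp_compare {n : ℕ} (a : Fin n → ℝ) (ha : ∀ i, 0 ≤ a i) {r ρ : ℝ}
    (hr : 0 < r) (hρ : r ≤ ρ) :
    (∑ i, a i ^ r) ^ (1 / r) ≤ (n : ℝ) ^ (1 / r - 1 / ρ) * (∑ i, a i ^ ρ) ^ (1 / ρ) := by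
  have hρ0 : 0 < ρ := lt_of_lt_of_le hr hρ
  rcases Nat.eq_zero_or_pos n with hn | hn
  · subst hn
    simp only [Finset.univ_eq_empty, Finset.sum_empty, Nat.cast_zero]
    rw [Real.zero_rpow (one_div_ne_zero hr.ne'), Real.zero_rpow (one_div_ne_zero hρ0.ne'),
      mul_zero]
  have hn' : (0 : ℝ) < n := by exact_mod_cast hn
  have hsum_r : 0 ≤ ∑ i, a i ^ r := Finset.sum_nonneg fun i _ => Real.rpow_nonneg (ha i) r
  have hsum_ρ : 0 ≤ ∑ i, a i ^ ρ := Finset.sum_nonneg fun i _ => Real.rpow_nonneg (ha i) ρ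
  have key := Real.rpow_arith_mean_le_arith_mean_rpow Finset.univ
      (fun _ : Fin n => 1 / (n : ℝ)) (fun i => a i ^ r)
      (fun i _ => by positivity) (by
        rw [Finset.sum_const, Finset.card_univ, Fintype.card_fin, nsmul_eq_mul]
        exact mul_one_div_cancel hn'.ne')
      (fun i _ => Real.rpow_nonneg (ha i) r)
      (p := ρ / r) ((one_le_div hr).2 hρ)
  have hz : ∀ i : Fin n, (a i ^ r) ^ (ρ / r) = a i ^ ρ := fun i => by
    rw [← Real.rpow_mul (ha i), mul_div_cancel₀ _ hr.ne']
  simp only [hz, ← Finset.mul_sum] at key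
  -- key : (1/n * ∑ a^r) ^ (ρ/r) ≤ 1/n * ∑ a^ρ
  have h1 : ((1 / (n : ℝ) * ∑ i, a i ^ r) ^ (ρ / r)) ^ (1 / ρ) ≤
      (1 / (n : ℝ) * ∑ i, a i ^ ρ) ^ (1 / ρ) :=
    Real.rpow_le_rpow (Real.rpow_nonneg (by positivity) _) key (by positivity)
  rw [← Real.rpow_mul (by positivity)] at h1
  have hexp : ρ / r * (1 / ρ) = 1 / r := by
    rw [div_mul_div_comm, mul_one, mul_comm r ρ, ← div_div, div_self hρ0.ne']
  rw [hexp] at h1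
  rw [Real.mul_rpow (by positivity) hsum_r, Real.mul_rpow (by positivity) hsum_ρ] at h1
  have h2 : (∑ i, a i ^ r) ^ (1 / r) =
      (n : ℝ) ^ (1 / r) * ((1 / (n : ℝ)) ^ (1 / r) * (∑ i, a i ^ r) ^ (1 / r)) := by
    rw [← mul_assoc, ← Real.mul_rpow (le_of_lt hn') (by positivity), mul_one_div_cancel hn'.ne',
      Real.one_rpow, one_mul]
  rw [h2]
  calc (n : ℝ) ^ (1 / r) * ((1 / (n : ℝ)) ^ (1 / r) * (∑ i, a i ^ r) ^ (1 / r))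
      ≤ (n : ℝ) ^ (1 / r) * ((1 / (n : ℝ)) ^ (1 / ρ) * (∑ i, a i ^ ρ) ^ (1 / ρ)) := by
        apply mul_le_mul_of_nonneg_left h1 (Real.rpow_nonneg (le_of_lt hn') _)
    _ = (n : ℝ) ^ (1 / r - 1 / ρ) * (∑ i, a i ^ ρ) ^ (1 / ρ) := by
        rw [one_div ((n : ℝ)), Real.inv_rpow (le_of_lt hn'), ← Real.rpow_neg (le_of_lt hn'),
          ← mul_assoc, ← Real.rpow_add hn', ← sub_eq_add_neg]

lemma mixed_le {n : ℕ} : ∀ (m : ℕ) {ρ : ℝ}, 0 < ρ → ∀ (r : Fin m → ℝ),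
    (∀ j, 0 < r j) → (∀ j, r j ≤ ρ) → ∀ (F : (Fin m → Fin n) → ℝ), (∀ i, 0 ≤ F i) →
    mixedSum m r F ≤ (n : ℝ) ^ (∑ j, (1 / r j - 1 / ρ)) * (∑ i, F i ^ ρ) ^ (1 / ρ)
  | 0, ρ, hρ, r, hr, hrρ, F, hF => by
      have : ∑ i : Fin 0 → Fin n, F i ^ ρ = F finZeroElim ^ ρ := by
        have hu : ∀ x : Fin 0 → Fin n, x = finZeroElim := fun x => funext fun i => i.elim0
        rw [Fintype.sum_subsingleton _ (finZeroElim : Fin 0 → Fin n)]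
      rw [mixedSum, this, ← Real.rpow_mul (hF _), mul_one_div_cancel hρ.ne', Real.rpow_one]
      simp
  | m + 1, ρ, hρ, r, hr, hrρ, F, hF => by
      rcases Nat.eq_zero_or_pos n with hn | hn
      · subst hn
        rw [mixedSum]
        simp only [Finset.univ_eq_empty, Finset.sum_empty,
          Real.zero_rpow (one_div_ne_zero (hr 0).ne')]
        positivity
      have hn' : (0 : ℝ) < n := by exact_mod_cast hn
      set G : Fin n → ℝ := fun i => mixedSum m (fun j => r j.succ) (fun is => F (Fin.cons i is))
        with hG
      set a : Fin n → ℝ := fun i => (∑ is : Fin m → Fin n, F (Fin.cons i is) ^ ρ) ^ (1 / ρ)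
        with ha
      have ha0 : ∀ i, 0 ≤ a i := fun i => Real.rpow_nonneg
        (Finset.sum_nonneg fun _ _ => Real.rpow_nonneg (hF _) _) _
      set C : ℝ := (n : ℝ) ^ (∑ j : Fin m, (1 / r j.succ - 1 / ρ)) with hC
      have hC0 : 0 ≤ C := Real.rpow_nonneg (le_of_lt hn') _
      have hIH : ∀ i, G i ≤ C * a i := fun i =>
        mixed_le m hρ (fun j => r j.succ) (fun j => hr _) (fun j => hrρ _)
          (fun is => F (Fin.cons i is)) (fun is => hF _)
      have hG0 : ∀ i, 0 ≤ G i := fun i =>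
        mixedSum_nonneg m _ _ fun is => hF _
      have step1 : mixedSum (m + 1) r F ≤ (∑ i, (C * a i) ^ r 0) ^ (1 / r 0) := by
        rw [mixedSum]
        apply Real.rpow_le_rpow (Finset.sum_nonneg fun i _ => Real.rpow_nonneg (hG0 i) _)
          (Finset.sum_le_sum fun i _ => Real.rpow_le_rpow (hG0 i) (hIH i) (hr 0).le)
          (one_div_nonneg.2 (hr 0).le)
      have step2 : (∑ i, (C * a i) ^ r 0) ^ (1 / r 0) = C * (∑ i, a i ^ r 0) ^ (1 / r 0) := by
        have : ∀ i : Fin n, (C * a i) ^ r 0 = C ^ r 0 * a i ^ r 0 := fun i =>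
          Real.mul_rpow hC0 (ha0 i)
        simp only [this, ← Finset.mul_sum]
        rw [Real.mul_rpow (Real.rpow_nonneg hC0 _)
          (Finset.sum_nonneg fun i _ => Real.rpow_nonneg (ha0 i) _),
          ← Real.rpow_mul hC0, mul_one_div_cancel (hr 0).ne', Real.rpow_one]
      have step3 : (∑ i, a i ^ r 0) ^ (1 / r 0) ≤
          (n : ℝ) ^ (1 / r 0 - 1 / ρ) * (∑ i, a i ^ ρ) ^ (1 / ρ) :=
        lp_compare a ha0 (hr 0) (hrρ 0)
      have hsplit : (∑ i, a i ^ ρ) = ∑ x : Fin (m + 1) → Fin n, F x ^ ρ := by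
        have h1 : ∀ i : Fin n, a i ^ ρ = ∑ is : Fin m → Fin n, F (Fin.cons i is) ^ ρ := fun i => by
          rw [ha, ← Real.rpow_mul (Finset.sum_nonneg fun _ _ => Real.rpow_nonneg (hF _) _),
            one_div_mul_cancel hρ.ne', Real.rpow_one]
        simp only [h1]
        exact (Fintype.sum_prod_type
            (f := fun q : Fin n × (Fin m → Fin n) => F (Fin.cons q.1 q.2) ^ ρ)).symm.trans
          (Fintype.sum_equiv (Fin.consEquiv fun _ => Fin n) _ _ fun q => rfl)
      have hCmul : C * (n : ℝ) ^ (1 / r 0 - 1 / ρ) =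
          (n : ℝ) ^ (∑ j : Fin (m + 1), (1 / r j - 1 / ρ)) := by
        rw [hC, ← Real.rpow_add hn', Fin.sum_univ_succ]
        congr 1
        ring
      calc mixedSum (m + 1) r F ≤ C * (∑ i, a i ^ r 0) ^ (1 / r 0) := step2 ▸ step1
        _ ≤ C * ((n : ℝ) ^ (1 / r 0 - 1 / ρ) * (∑ i, a i ^ ρ) ^ (1 / ρ)) :=
            mul_le_mul_of_nonneg_left step3 hC0
        _ = (n : ℝ) ^ (∑ j : Fin (m + 1), (1 / r j - 1 / ρ)) *
            (∑ x : Fin (m + 1) → Fin n, F x ^ ρ) ^ (1 / ρ) := by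
            rw [← mul_assoc, hCmul, hsplit]

/-- The case `M_<^{HL} = {1,…,m}`: from the generalized Hardy–Littlewood inequality with
exponent `ρ = 2m/(m+1-2|1/p|)` one deduces the mixed-sum inequality with
`n^s`, `s = ∑ 1/r_j + |1/p| - (m+1)/2`. -/
theorem stmt10 (m : ℕ) (hm : 2 ≤ m) (p : Fin m → ℝ≥0∞) [∀ j, Fact (1 ≤ p j)]
    (hp2 : ∀ j, 2 ≤ p j) (hp : ∑ j, (p j)⁻¹ ≤ 1 / 2)
    (r : Fin m → ℝ) (hr : ∀ j, 0 < r j)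
    (hrHL : ∀ j, ((m : ℝ) + 1 - 2 * (∑ j, (p j)⁻¹).toReal) / (2 * m) ≤ 1 / r j)
    (D : ℝ) (hD : 1 ≤ D)
    (hHL : ∀ (n : ℕ)
      (T : ContinuousMultilinearMap ℂ (fun j : Fin m => PiLp (p j) (fun _ : Fin n => ℂ)) ℂ),
      (∑ i : Fin m → Fin n, ‖T (fun j => WithLp.toLp (p j) (Pi.single (i j) 1))‖ ^
          (2 * (m : ℝ) / ((m : ℝ) + 1 - 2 * (∑ j, (p j)⁻¹).toReal))) ^
        (((m : ℝ) + 1 - 2 * (∑ j, (p j)⁻¹).toReal) / (2 * m)) ≤ D * ‖T‖)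
    (n : ℕ)
    (T : ContinuousMultilinearMap ℂ (fun j : Fin m => PiLp (p j) (fun _ : Fin n => ℂ)) ℂ) :
    mixedSum m r (fun i => ‖T (fun j => WithLp.toLp (p j) (Pi.single (i j) 1))‖) ≤
      D * (n : ℝ) ^ ((∑ j, 1 / r j) + (∑ j, (p j)⁻¹).toReal - ((m : ℝ) + 1) / 2) * ‖T‖ := by
  set t : ℝ := (∑ j, (p j)⁻¹).toReal with htdef
  have hm' : (2 : ℝ) ≤ m := by exact_mod_cast hm
  have ht0 : 0 ≤ t := ENNReal.toReal_nonneg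
  have ht : t ≤ 1 / 2 := by
    calc t ≤ ((1 : ℝ≥0∞) / 2).toReal := ENNReal.toReal_mono (by simp) hp
      _ = 1 / 2 := by simp
  have hden : 0 < (m : ℝ) + 1 - 2 * t := by linarith
  set ρ : ℝ := 2 * (m : ℝ) / ((m : ℝ) + 1 - 2 * t) with hρdef
  have hρ : 0 < ρ := by positivity
  have h1ρ : 1 / ρ = ((m : ℝ) + 1 - 2 * t) / (2 * m) := one_div_div _ _
  have hrρ : ∀ j, r j ≤ ρ := fun j => by
    have := hrHL j
    rw [← h1ρ] at this
    exact le_of_one_div_le_one_div hρ this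
  set F : (Fin m → Fin n) → ℝ := fun i => ‖T (fun j => WithLp.toLp (p j) (Pi.single (i j) 1))‖ with hFdef
  have hF : ∀ i, 0 ≤ F i := fun i => norm_nonneg _
  have hmain := mixed_le m hρ r hr hrρ F hF
  have hHL' : (∑ i : Fin m → Fin n, F i ^ ρ) ^ (1 / ρ) ≤ D * ‖T‖ := by
    rw [h1ρ]
    exact hHL n T
  have hE : (∑ j, (1 / r j - 1 / ρ)) = (∑ j, 1 / r j) + t - ((m : ℝ) + 1) / 2 := by
    rw [Finset.sum_sub_distrib, Finset.sum_const, Finset.card_univ, Fintype.card_fin,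
      nsmul_eq_mul, h1ρ]
    have hm0 : (m : ℝ) ≠ 0 := by positivity
    field_simp
    ring
  calc mixedSum m r F ≤ (n : ℝ) ^ (∑ j, (1 / r j - 1 / ρ)) *
        (∑ i : Fin m → Fin n, F i ^ ρ) ^ (1 / ρ) := hmain
    _ ≤ (n : ℝ) ^ (∑ j, (1 / r j - 1 / ρ)) * (D * ‖T‖) :=
        mul_le_mul_of_nonneg_left hHL' (Real.rpow_nonneg (Nat.cast_nonneg n) _)
    _ = D * (n : ℝ) ^ ((∑ j, 1 / r j) + t - ((m : ℝ) + 1) / 2) * ‖T‖ := by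
        rw [hE]; ring
end
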